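/- Let q be an odd prime, r ≥ 0 an integer, and t an integer with gcd(t,q) = 1. Define T = Σ_{β ∈ (ℤ/q²ℤ)ˣ} (β/q)^r · e(t·q^r·β̄ / q²), where β̄ is the inverse of β modulo q² and (β/q) is the Legendre symbol. Then |T| = q^{3/2} if r = 1; T = q(q−1) if r ≥ 2 is even; and T = 0 if r = 0 or if r ≥ 3 is odd. -/

import Mathlib

/-- `e(x) = exp(2πix)`. -/
noncomputable def eC (x : ℝ) : ℂ := Complex.exp (2 * (Real.pi : ℂ) * Complex.I * (x : ℂ))

lemma eC_int (m : ℤ) : eC m = 1 := by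
  unfold eC
  rw [show (2 * (Real.pi : ℂ) * Complex.I * ((m:ℝ):ℂ)) = (m:ℤ) * (2 * Real.pi * Complex.I) by push_cast; ring]
  exact Complex.exp_int_mul_two_pi_mul_I m

lemma eC_add (x y : ℝ) : eC (x + y) = eC x * eC y := by
  unfold eC; rw [← Complex.exp_add]; push_cast; ring_nf

lemma eC_pow (x : ℝ) (k : ℕ) : eC x ^ k = eC (k * x) := by
  unfold eC; rw [← Complex.exp_nat_mul]; push_cast; ring_nf

lemma eC_eq_one_iff (x : ℝ) : eC x = 1 ↔ ∃ m : ℤ, x = m := by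
  unfold eC
  rw [Complex.exp_eq_one_iff]
  constructor
  · rintro ⟨n, hn⟩
    refine ⟨n, ?_⟩
    have h2 : (2 * (Real.pi:ℂ) * Complex.I) ≠ 0 := by
      simpa [mul_comm, mul_assoc] using Complex.two_pi_I_ne_zero
    have : (x : ℂ) = (n : ℂ) := by
      have hn' : (2 * (Real.pi:ℂ) * Complex.I) * (x:ℂ)
          = (2 * (Real.pi:ℂ) * Complex.I) * (n:ℂ) := by
        rw [hn]; ring
      exact mul_left_cancel₀ h2 hn'
    exact_mod_cast this
  · rintro ⟨m, rfl⟩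
    exact ⟨m, by push_cast; ring⟩

lemma aux_geom (n : ℕ) (z : ℂ) (h1 : z ≠ 1) (hn : z ^ n = 1) :
    ∑ β ∈ Finset.range n, z ^ β = 0 := by
  rw [geom_sum_eq h1, hn, sub_self, zero_div]

lemma aux_inv_inv {n : ℕ} {x : ZMod n} (hx : IsUnit x) : x⁻¹⁻¹ = x := by
  have hux : IsUnit x⁻¹ := IsUnit.of_mul_eq_one x (ZMod.inv_mul_of_unit x hx)
  calc x⁻¹⁻¹ = x⁻¹⁻¹ * (x⁻¹ * x) := by rw [ZMod.inv_mul_of_unit x hx, mul_one]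
    _ = (x⁻¹⁻¹ * x⁻¹) * x := by ring
    _ = x := by rw [ZMod.inv_mul_of_unit _ hux, one_mul]

open Finset in
lemma aux_group (q : ℕ) (hq0 : 0 < q) (g : ℕ → ℂ) :
    ∑ β ∈ range (q^2), g (β % q) = (q : ℂ) * ∑ a ∈ range q, g a := by
  have h1 : ∑ β ∈ range (q^2), g (β % q)
      = ∑ p ∈ range q ×ˢ range q, g p.2 := by
    refine Finset.sum_nbij' (fun β => (β / q, β % q)) (fun p => q * p.1 + p.2) ?_ ?_ ?_ ?_ ?_
    · intro a ha
      simp only [mem_range, pow_two] at ha ⊢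
      simp only [mem_product, mem_range]
      exact ⟨Nat.div_lt_iff_lt_mul hq0 |>.mpr ha, Nat.mod_lt _ hq0⟩
    · intro p hp
      simp only [mem_product, mem_range] at hp
      simp only [mem_range, pow_two]
      nlinarith [hp.1, hp.2]
    · intro a _; exact Nat.div_add_mod a q
    · intro p hp
      simp only [mem_product, mem_range] at hp
      ext
      · simp [Nat.mul_add_div hq0, Nat.div_eq_of_lt hp.2]
      · simp [Nat.mul_add_mod, Nat.mod_eq_of_lt hp.2]
    · intro a _; rfl
  rw [h1, Finset.sum_product]
  simp [Finset.sum_const, card_range, mul_comm]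

open Finset in
lemma aux_invol (q : ℕ) [NeZero (q^2)] (f : ℕ → ℂ) :
    ∑ β ∈ (range (q^2)).filter (fun β => Nat.Coprime β (q^2)), f (((β : ZMod (q^2))⁻¹).val)
      = ∑ β ∈ (range (q^2)).filter (fun β => Nat.Coprime β (q^2)), f β := by
  have hmem : ∀ β ∈ (range (q^2)).filter (fun β => Nat.Coprime β (q^2)),
      ((β : ZMod (q^2))⁻¹).val ∈ (range (q^2)).filter (fun β => Nat.Coprime β (q^2)) := by
    intro β hβ
    simp only [mem_filter, mem_range] at hβ ⊢
    have hu : IsUnit ((β : ZMod (q^2))) := (ZMod.isUnit_iff_coprime β (q^2)).mpr hβ.2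
    have hui : IsUnit ((β : ZMod (q^2))⁻¹) :=
      IsUnit.of_mul_eq_one _ (ZMod.inv_mul_of_unit _ hu)
    refine ⟨ZMod.val_lt _, ?_⟩
    rw [← ZMod.isUnit_iff_coprime, ZMod.natCast_zmod_val]
    exact hui
  have hinv : ∀ β ∈ (range (q^2)).filter (fun β => Nat.Coprime β (q^2)),
      ((((((β : ZMod (q^2))⁻¹).val : ℕ) : ZMod (q^2))⁻¹).val) = β := by
    intro β hβ
    simp only [mem_filter, mem_range] at hβ
    have hu : IsUnit ((β : ZMod (q^2))) := (ZMod.isUnit_iff_coprime β (q^2)).mpr hβ.2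
    rw [ZMod.natCast_zmod_val, aux_inv_inv hu, ZMod.val_natCast, Nat.mod_eq_of_lt hβ.1]
  exact Finset.sum_nbij' (fun β => ((β : ZMod (q^2))⁻¹).val)
    (fun β => ((β : ZMod (q^2))⁻¹).val) hmem hmem hinv hinv (fun a _ => rfl)


open Finset in
/-- evaluation of `T = Σ_{β ∈ (ℤ/q²ℤ)ˣ} (β/q)^r e(t·q^r·β̄/q²)`:
`|T| = q^{3/2}` if `r = 1`; `T = q(q−1)` if `r ≥ 2` is even; `T = 0` if `r = 0` or `r ≥ 3`
is odd. -/
theorem T_eval (q : ℕ) [Fact q.Prime] (hqodd : Odd q) (r : ℕ) (t : ℤ)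
    (ht : IsCoprime t (q : ℤ)) (T : ℂ)
    (hT : T = ∑ β ∈ Finset.range (q ^ 2),
        if Nat.Coprime β (q ^ 2) then
          ((legendreSym q (β : ℤ) : ℤ) : ℂ) ^ r *
            eC (((t * (q : ℤ) ^ r * ((((β : ZMod (q ^ 2))⁻¹).val : ℕ) : ℤ) : ℤ) : ℝ) /
              ((q : ℝ) ^ 2))
        else 0) :
    (r = 1 → ‖T‖ = (q : ℝ) ^ ((3 : ℝ) / 2)) ∧
    (2 ≤ r → Even r → T = (q : ℂ) * ((q : ℂ) - 1)) ∧
    (r = 0 ∨ (3 ≤ r ∧ Odd r) → T = 0) := by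
  have hq : q.Prime := Fact.out
  have hq0 : 0 < q := hq.pos
  have hq1 : 1 < q := hq.one_lt
  have hq2 : q ≠ 2 := by
    rintro rfl
    exact (by norm_num : ¬ Odd 2) hqodd
  haveI : NeZero q := ⟨hq0.ne'⟩
  haveI : NeZero (q^2) := ⟨by positivity⟩
  have hqR : (q:ℝ) ≠ 0 := by positivity
  have hqt : ¬ ((q:ℤ) ∣ t) := by
    intro hdvd
    have hu : IsUnit ((q:ℤ)) := ht.isUnit_of_dvd' hdvd dvd_rfl
    rw [Int.isUnit_iff] at hu
    omega
  have hcop : ∀ β : ℕ, Nat.Coprime β (q^2) ↔ ¬ q ∣ β := by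
    intro β
    rw [Nat.coprime_pow_right_iff (by norm_num : 0 < 2), Nat.coprime_comm]
    exact hq.coprime_iff_not_dvd
  rw [← Finset.sum_filter] at hT
  set ι : ℕ → ℕ := fun β => ((β : ZMod (q^2))⁻¹).val with hι
  set S : Finset ℕ := (range (q^2)).filter (fun β => Nat.Coprime β (q^2)) with hS
  -- Legendre symbol facts
  have hL0 : ∀ β : ℕ, q ∣ β → legendreSym q (β:ℤ) = 0 := by
    intro β h
    rw [legendreSym.eq_zero_iff]
    exact_mod_cast (ZMod.natCast_eq_zero_iff β q).mpr h
  have hLne : ∀ β : ℕ, ¬ q ∣ β → ((β:ℤ) : ZMod q) ≠ 0 := by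
    intro β h hz
    exact h ((ZMod.natCast_eq_zero_iff β q).mp (by exact_mod_cast hz))
  have hLsq : ∀ β : ℕ, ¬ q ∣ β → (legendreSym q (β:ℤ))^2 = 1 :=
    fun β h => legendreSym.sq_one q (hLne β h)
  have hLmod : ∀ β : ℕ, legendreSym q (β:ℤ) = legendreSym q ((β % q : ℕ) : ℤ) := by
    intro β
    rw [legendreSym.mod]
    congr 1
  have hinv : ∀ β ∈ S, ι (ι β) = β := by
    intro β hβ
    simp only [hS, mem_filter, mem_range] at hβ
    have hu : IsUnit ((β : ZMod (q^2))) := (ZMod.isUnit_iff_coprime β (q^2)).mpr hβ.2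
    show ((((((β : ZMod (q^2))⁻¹).val : ℕ) : ZMod (q^2))⁻¹).val) = β
    rw [ZMod.natCast_zmod_val, aux_inv_inv hu, ZMod.val_natCast, Nat.mod_eq_of_lt hβ.1]
  -- the eC factor is 1 when r ≥ 2
  have hecone : 2 ≤ r → ∀ β : ℕ,
      eC (((t * (q : ℤ) ^ r * ((ι β : ℕ) : ℤ) : ℤ) : ℝ) / ((q : ℝ) ^ 2)) = 1 := by
    intro hr2 β
    have harg : ((t * (q : ℤ) ^ r * ((ι β : ℕ) : ℤ) : ℤ) : ℝ) / ((q : ℝ) ^ 2)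
        = ((t * (q : ℤ) ^ (r-2) * ((ι β : ℕ) : ℤ) : ℤ) : ℝ) := by
      obtain ⟨s, rfl⟩ : ∃ s, r = s + 2 := ⟨r - 2, by omega⟩
      push_cast
      field_simp
      ring
    rw [harg, eC_int]
  refine ⟨?_, ?_, ?_⟩
  · -- r = 1
    rintro rfl
    haveI : Fact (1 < q) := ⟨hq1⟩
    have hLinv : ∀ β ∈ S, legendreSym q ((ι β : ℕ):ℤ) = legendreSym q (β:ℤ) := by
      intro β hβ
      have hβ' : β < q^2 ∧ Nat.Coprime β (q^2) := by simpa [hS] using hβ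
      have hnd : ¬ q ∣ β := (hcop β).mp hβ'.2
      have hu : IsUnit ((β : ZMod (q^2))) := (ZMod.isUnit_iff_coprime β (q^2)).mpr hβ'.2
      have hone2 : ((β * ι β : ℕ) : ZMod (q^2)) = 1 := by
        push_cast
        rw [ZMod.natCast_zmod_val]
        exact ZMod.mul_inv_of_unit _ hu
      have honeq : ((β * ι β : ℕ) : ZMod q) = 1 := by
        have h2 := ZMod.cast_natCast (dvd_pow_self q two_ne_zero) (β * ι β) (R := ZMod q)
        rw [hone2] at h2
        rw [← h2]
        exact ZMod.cast_one (dvd_pow_self q two_ne_zero)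
      have hmul : legendreSym q (β:ℤ) * legendreSym q ((ι β : ℕ):ℤ) = 1 := by
        rw [← legendreSym.mul]
        have harg : (β:ℤ) * ((ι β : ℕ):ℤ) = ((β * ι β : ℕ):ℤ) := by push_cast; ring
        rw [harg]
        show (quadraticChar (ZMod q)) ((((β * ι β : ℕ):ℤ) : ZMod q)) = 1
        have hc : ((((β * ι β : ℕ):ℤ)) : ZMod q) = ((β * ι β : ℕ) : ZMod q) := by
          push_cast; rfl
        rw [hc, honeq]
        exact map_one _
      calc legendreSym q ((ι β : ℕ):ℤ)
          = legendreSym q ((ι β : ℕ):ℤ) * (legendreSym q (β:ℤ))^2 := by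
            rw [hLsq β hnd, mul_one]
        _ = (legendreSym q (β:ℤ) * legendreSym q ((ι β : ℕ):ℤ)) * legendreSym q (β:ℤ) := by
            ring
        _ = legendreSym q (β:ℤ) := by rw [hmul, one_mul]
    set F : ℕ → ℂ := fun m =>
      ((legendreSym q ((ι m : ℕ):ℤ) : ℤ) : ℂ) * eC (((t * m : ℤ) : ℝ) / (q:ℝ)) with hF
    have hstep1 : T = ∑ β ∈ S, F (ι β) := by
      rw [hT]
      refine Finset.sum_congr rfl ?_
      intro β hβ
      have h1 : F (ι β) = ((legendreSym q (β:ℤ) : ℤ):ℂ)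
          * eC (((t * (ι β : ℕ) : ℤ):ℝ)/(q:ℝ)) := by
        rw [hF]
        simp only
        rw [hinv β hβ]
      rw [h1, pow_one]
      congr 1
      congr 1
      rw [show t * (q:ℤ)^1 * ((ι β : ℕ):ℤ) = (q:ℤ) * (t * ((ι β : ℕ):ℤ)) from by ring]
      have hdiv : ∀ m : ℤ, ((((q:ℤ) * m : ℤ)):ℝ)/(q:ℝ)^2 = ((m:ℤ):ℝ)/(q:ℝ) := by
        intro m
        push_cast
        field_simp
      exact hdiv _
    have hstep2 : T = ∑ β ∈ S, ((legendreSym q (β:ℤ) : ℤ):ℂ)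
        * eC (((t * β : ℤ):ℝ)/(q:ℝ)) := by
      calc T = ∑ β ∈ S, F (ι β) := hstep1
        _ = ∑ β ∈ S, F β := by
            simp only [hι, hS]
            exact aux_invol q F
        _ = ∑ β ∈ S, ((legendreSym q (β:ℤ) : ℤ):ℂ) * eC (((t * β : ℤ):ℝ)/(q:ℝ)) := by
            refine Finset.sum_congr rfl ?_
            intro β hβ
            rw [hF]
            simp only
            rw [hLinv β hβ]
    have hzeroNC : ∑ β ∈ (range (q^2)).filter (fun β => ¬ Nat.Coprime β (q^2)),
        ((legendreSym q (β:ℤ) : ℤ):ℂ) * eC (((t * β : ℤ):ℝ)/(q:ℝ)) = 0 := by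
      refine Finset.sum_eq_zero ?_
      intro β hβ
      simp only [mem_filter] at hβ
      have hd : q ∣ β := not_not.mp ((hcop β).not.mp hβ.2 ∘ id)
      rw [hL0 β hd]
      norm_num
    have hT3 : T = ∑ β ∈ range (q^2),
        ((legendreSym q (β:ℤ) : ℤ):ℂ) * eC (((t * β : ℤ):ℝ)/(q:ℝ)) := by
      have hsplit := Finset.sum_filter_add_sum_filter_not (range (q^2))
        (fun β => Nat.Coprime β (q^2))
        (fun β => ((legendreSym q (β:ℤ) : ℤ):ℂ) * eC (((t * β : ℤ):ℝ)/(q:ℝ)))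
      rw [hzeroNC] at hsplit
      rw [← hS] at hsplit
      rw [hstep2]
      linear_combination hsplit
    have hmodeq : ∀ β ∈ range (q^2),
        ((legendreSym q (β:ℤ) : ℤ):ℂ) * eC (((t * β : ℤ):ℝ)/(q:ℝ))
        = (fun a : ℕ => ((legendreSym q (a:ℤ) : ℤ):ℂ) * eC (((t * a : ℤ):ℝ)/(q:ℝ))) (β % q) := by
      intro β _
      show ((legendreSym q (β:ℤ) : ℤ):ℂ) * eC (((t * β : ℤ):ℝ)/(q:ℝ))
          = ((legendreSym q (((β % q : ℕ)):ℤ) : ℤ):ℂ) * eC (((t * (β % q : ℕ) : ℤ):ℝ)/(q:ℝ))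
      have hsplitβ : ((t * β : ℤ):ℝ)/(q:ℝ)
          = ((t * (β % q : ℕ) : ℤ):ℝ)/(q:ℝ) + ((t * (β / q : ℕ) : ℤ):ℝ) := by
        have hβd : (β:ℤ) = (q:ℤ) * ((β / q : ℕ):ℤ) + ((β % q : ℕ):ℤ) := by
          exact_mod_cast (Nat.div_add_mod β q).symm
        have hint : (t * β : ℤ)
            = t * ((β % q : ℕ) : ℤ) + (t * ((β / q : ℕ) : ℤ)) * q := by
          linear_combination t * hβd
        rw [hint]
        push_cast
        field_simp
      rw [hsplitβ, eC_add, eC_int, mul_one, ← hLmod]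
    have hgr := aux_group q hq0
      (fun a => ((legendreSym q (a:ℤ) : ℤ):ℂ) * eC (((t * a : ℤ):ℝ)/(q:ℝ)))
    have hTq : T = (q:ℂ) * ∑ a ∈ range q,
        ((legendreSym q (a:ℤ) : ℤ):ℂ) * eC (((t * a : ℤ):ℝ)/(q:ℝ)) := by
      rw [hT3, Finset.sum_congr rfl hmodeq, hgr]
    -- identify with a Gauss sum
    have hζq : eC ((t:ℝ)/(q:ℝ)) ^ q = 1 := by
      rw [eC_pow]
      have h : (q:ℝ) * ((t:ℝ)/(q:ℝ)) = ((t:ℤ):ℝ) := by field_simp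
      rw [h, eC_int]
    have hprim : IsPrimitiveRoot (eC ((t:ℝ)/(q:ℝ))) q := by
      rw [IsPrimitiveRoot.iff_def]
      refine ⟨hζq, ?_⟩
      intro l hl
      rw [eC_pow, eC_eq_one_iff] at hl
      obtain ⟨m, hm⟩ := hl
      have hlm : (l:ℤ) * t = m * q := by
        have h : (l:ℝ) * t = (m:ℝ) * q := by
          field_simp at hm
          linarith
        exact_mod_cast h
      have hdvd : (q:ℤ) ∣ (l:ℤ) * t := ⟨m, by linarith⟩
      have hqp : Prime (q:ℤ) := Nat.prime_iff_prime_int.mp hq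
      rcases hqp.dvd_mul.mp hdvd with h | h
      · exact_mod_cast h
      · exact absurd h hqt
    set χc : MulChar (ZMod q) ℂ :=
      (quadraticChar (ZMod q)).ringHomComp (Int.castRingHom ℂ) with hχc
    set ψ : AddChar (ZMod q) ℂ := AddChar.zmodChar q hζq with hψdef
    have hG : (∑ a ∈ range q,
        ((legendreSym q (a:ℤ) : ℤ):ℂ) * eC (((t * a : ℤ):ℝ)/(q:ℝ))) = gaussSum χc ψ := by
      rw [gaussSum]
      refine Finset.sum_nbij' (fun a => (a : ZMod q)) (fun x => x.val) ?_ ?_ ?_ ?_ ?_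
      · intro a _; exact mem_univ _
      · intro x _; exact mem_range.mpr (ZMod.val_lt x)
      · intro a ha; exact ZMod.val_cast_of_lt (mem_range.mp ha)
      · intro x _; exact ZMod.natCast_zmod_val x
      · intro a _
        have hχ : ((legendreSym q (a:ℤ) : ℤ):ℂ) = χc ((a : ZMod q)) := by
          rw [hχc, MulChar.ringHomComp_apply]
          congr 1
          show quadraticChar (ZMod q) (((a:ℤ) : ZMod q)) = quadraticChar (ZMod q) ((a : ZMod q))
          congr 1
          push_cast
          rfl
        have hψ : eC (((t * a : ℤ):ℝ)/(q:ℝ)) = ψ ((a : ZMod q)) := by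
          rw [hψdef, AddChar.zmodChar_apply', eC_pow]
          congr 1
          push_cast
          ring
        rw [hχ, hψ]
    have hχne : χc ≠ 1 := by
      rw [hχc]
      refine (MulChar.ringHomComp_ne_one_iff (RingHom.injective_int _)).mpr ?_
      apply quadraticChar_ne_one
      rw [ZMod.ringChar_zmod_n]
      exact hq2
    have hχquad : χc.IsQuadratic := (quadraticChar_isQuadratic (ZMod q)).comp _
    have hψprim : ψ.IsPrimitive := by
      have h := AddChar.zmodChar_primitive_of_primitive_root q hprim
      exact h
    have hsq : gaussSum χc ψ ^ 2 = χc (-1) * Fintype.card (ZMod q) :=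
      gaussSum_sq hχne hχquad hψprim
    have hcm1 : ‖χc (-1)‖ = 1 := by
      have h1 : (quadraticChar (ZMod q) (-1))^2 = 1 :=
        quadraticChar_sq_one (neg_ne_zero.mpr one_ne_zero)
      rcases Int.isUnit_iff.mp (IsUnit.of_mul_eq_one _ (by rw [← sq]; exact h1)) with h | h
      · rw [hχc, MulChar.ringHomComp_apply, h]; simp
      · rw [hχc, MulChar.ringHomComp_apply, h]; simp
    have habsG : ‖gaussSum χc ψ‖ = Real.sqrt q := by
      have h2 : ‖gaussSum χc ψ‖ ^ 2 = q := by
        rw [← norm_pow, hsq, norm_mul, hcm1, one_mul, ZMod.card, Complex.norm_natCast]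
      have h3 : ‖gaussSum χc ψ‖
          = Real.sqrt (‖gaussSum χc ψ‖^2) :=
        (Real.sqrt_sq (norm_nonneg _)).symm
      rw [h3, h2]
    rw [hTq, hG, norm_mul, Complex.norm_natCast, habsG]
    have hfin : (q:ℝ)^((3:ℝ)/2) = (q:ℝ)^(1:ℝ) * (q:ℝ)^((1:ℝ)/2) := by
      rw [← Real.rpow_add (by positivity)]
      norm_num
    rw [hfin, Real.rpow_one, Real.sqrt_eq_rpow]
  · -- r even, ≥ 2
    intro hr2 hre
    obtain ⟨k, hk⟩ := hre
    have hterm : ∀ β ∈ S, ((legendreSym q (β:ℤ) : ℤ) : ℂ) ^ r *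
        eC (((t * (q : ℤ) ^ r * ((ι β : ℕ) : ℤ) : ℤ) : ℝ) / ((q : ℝ) ^ 2)) = 1 := by
      intro β hβ
      simp only [hS, mem_filter, mem_range] at hβ
      have hnd : ¬ q ∣ β := (hcop β).mp hβ.2
      rw [hecone hr2 β, mul_one]
      have h1 : ((legendreSym q (β:ℤ) : ℤ) : ℂ)^r = (((legendreSym q (β:ℤ))^r : ℤ) : ℂ) := by
        push_cast; ring
      rw [h1, hk, ← two_mul, pow_mul, hLsq β hnd]
      norm_num
    rw [hT, Finset.sum_congr rfl hterm, Finset.sum_const, nsmul_eq_mul, mul_one]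
    have hcard : S.card = q * (q - 1) := by
      have h1 : S.card = Nat.totient (q^2) := by
        rw [Nat.totient, hS]
        congr 1
        ext β
        simp [Nat.coprime_comm]
      rw [h1, Nat.totient_prime_pow hq (by norm_num : 0 < 2)]
      norm_num
    rw [hcard]
    push_cast [Nat.cast_sub hq0]
    ring
  · -- r = 0 or odd r ≥ 3
    rintro (rfl | ⟨hr3, hodd⟩)
    · -- r = 0
      set z : ℂ := eC ((t:ℝ)/(q:ℝ)^2) with hz
      have hz1 : z ≠ 1 := by
        rw [hz, Ne, eC_eq_one_iff]
        rintro ⟨m, hm⟩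
        apply hqt
        have : (t:ℝ) = (m:ℝ) * (q:ℝ)^2 := by
          field_simp at hm
          linarith
        have ht' : t = m * (q:ℤ)^2 := by exact_mod_cast this
        exact ⟨m * q, by push_cast at ht' ⊢; linarith⟩
      have hzq2 : z ^ (q^2) = 1 := by
        rw [hz, eC_pow]
        have : ((q^2 : ℕ) : ℝ) * ((t:ℝ)/(q:ℝ)^2) = ((t:ℤ):ℝ) := by
          push_cast; field_simp
        rw [this, eC_int]
      have hterm : ∀ β ∈ S, ((legendreSym q (β:ℤ) : ℤ) : ℂ) ^ 0 *
          eC (((t * (q : ℤ) ^ 0 * ((ι β : ℕ) : ℤ) : ℤ) : ℝ) / ((q : ℝ) ^ 2)) = z ^ (ι β) := by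
        intro β _
        rw [pow_zero, one_mul, hz, eC_pow]
        congr 1
        push_cast
        field_simp
      have hT2 : T = ∑ β ∈ S, z ^ β := by
        rw [hT, Finset.sum_congr rfl hterm]
        exact aux_invol q (fun m => z ^ m)
      have htot : ∑ β ∈ range (q^2), z ^ β = 0 := aux_geom _ z hz1 hzq2
      have hzq : z ^ q ≠ 1 := by
        have : z ^ q = eC ((t:ℝ)/(q:ℝ)) := by
          rw [hz, eC_pow]
          congr 1
          field_simp
        rw [this, Ne, eC_eq_one_iff]
        rintro ⟨m, hm⟩
        apply hqt
        have : (t:ℝ) = (m:ℝ) * (q:ℝ) := by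
          field_simp at hm
          linarith
        have ht' : t = m * (q:ℤ) := by exact_mod_cast this
        exact ⟨m, by linarith⟩
      have hnc : ∑ β ∈ (range (q^2)).filter (fun β => ¬ Nat.Coprime β (q^2)), z ^ β = 0 := by
        have heq : ∑ k ∈ range q, (z^q) ^ k
            = ∑ β ∈ (range (q^2)).filter (fun β => ¬ Nat.Coprime β (q^2)), z ^ β := by
          refine Finset.sum_nbij' (fun k => q * k) (fun β => β / q) ?_ ?_ ?_ ?_ ?_
          · intro k hk
            simp only [mem_range] at hk
            simp only [mem_filter, mem_range]
            constructor
            · have : q * k < q * q := Nat.mul_lt_mul_left hq0 |>.mpr hk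
              rw [pow_two]
              exact this
            · rw [hcop, not_not]
              exact dvd_mul_right q k
          · intro β hβ
            simp only [mem_filter, mem_range, pow_two] at hβ
            exact mem_range.mpr ((Nat.div_lt_iff_lt_mul hq0).mpr hβ.1)
          · intro k _
            exact Nat.mul_div_cancel_left k hq0
          · intro β hβ
            simp only [mem_filter] at hβ
            have hd : q ∣ β := by
              have := hβ.2
              rw [hcop] at this
              exact not_not.mp this
            exact Nat.mul_div_cancel' hd
          · intro k _
            rw [← pow_mul]
        rw [← heq]
        refine aux_geom q (z^q) hzq ?_
        rw [← pow_mul, ← pow_two]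
        exact hzq2
      have hsplit := Finset.sum_filter_add_sum_filter_not (range (q^2))
        (fun β => Nat.Coprime β (q^2)) (fun β => z ^ β)
      rw [htot] at hsplit
      rw [hnc] at hsplit
      rw [hT2, ← hS] at *
      linear_combination hsplit
    · -- odd r ≥ 3
      obtain ⟨k, hk⟩ := hodd
      have hterm : ∀ β ∈ S, ((legendreSym q (β:ℤ) : ℤ) : ℂ) ^ r *
          eC (((t * (q : ℤ) ^ r * ((ι β : ℕ) : ℤ) : ℤ) : ℝ) / ((q : ℝ) ^ 2))
          = ((legendreSym q (β:ℤ) : ℤ) : ℂ) := by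
        intro β hβ
        simp only [hS, mem_filter, mem_range] at hβ
        have hnd : ¬ q ∣ β := (hcop β).mp hβ.2
        rw [hecone (by omega) β, mul_one]
        have h1 : ((legendreSym q (β:ℤ) : ℤ) : ℂ)^r = ((((legendreSym q (β:ℤ))^r : ℤ)) : ℂ) := by
          push_cast; ring
        rw [h1, hk, pow_add, pow_mul, hLsq β hnd]
        norm_num
      have hzeroS : ∑ β ∈ (range (q^2)).filter (fun β => ¬ Nat.Coprime β (q^2)),
          ((legendreSym q (β:ℤ) : ℤ) : ℂ) = 0 := by
        refine Finset.sum_eq_zero ?_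
        intro β hβ
        simp only [mem_filter] at hβ
        have hd : q ∣ β := not_not.mp ((hcop β).not.mp hβ.2 ∘ id)
        rw [hL0 β hd]
        norm_num
      have hT2 : T = ∑ β ∈ range (q^2), ((legendreSym q (β:ℤ) : ℤ) : ℂ) := by
        rw [hT, Finset.sum_congr rfl hterm]
        have hsplit := Finset.sum_filter_add_sum_filter_not (range (q^2))
          (fun β => Nat.Coprime β (q^2)) (fun β => ((legendreSym q (β:ℤ) : ℤ) : ℂ))
        rw [hzeroS] at hsplit
        rw [← hS] at hsplit
        linear_combination hsplit
      have hmodeq : ∀ β ∈ range (q^2), ((legendreSym q (β:ℤ) : ℤ) : ℂ)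
          = (fun a : ℕ => ((legendreSym q (a:ℤ) : ℤ) : ℂ)) (β % q) := by
        intro β _
        show ((legendreSym q (β:ℤ) : ℤ) : ℂ) = ((legendreSym q ((β % q : ℕ):ℤ) : ℤ) : ℂ)
        rw [← hLmod]
      have hgr := aux_group q hq0 (fun a => ((legendreSym q (a:ℤ) : ℤ) : ℂ))
      rw [hT2, Finset.sum_congr rfl hmodeq, hgr]
      have hsum0 : ∑ a ∈ range q, ((legendreSym q (a:ℤ) : ℤ) : ℂ) = 0 := by
        have h1 : ∑ a ∈ range q, legendreSym q (a:ℤ) = ∑ x : ZMod q, quadraticChar (ZMod q) x := by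
          refine Finset.sum_nbij' (fun a => (a : ZMod q)) (fun x => x.val) ?_ ?_ ?_ ?_ ?_
          · intro a _; exact mem_univ _
          · intro x _; exact mem_range.mpr (ZMod.val_lt x)
          · intro a ha; exact ZMod.val_cast_of_lt (mem_range.mp ha)
          · intro x _; exact ZMod.natCast_zmod_val x
          · intro a _
            show legendreSym q (a:ℤ) = _
            rw [legendreSym]
            congr 1
            push_cast
            rfl
        have h2 : ∑ x : ZMod q, quadraticChar (ZMod q) x = 0 := by
          apply quadraticChar_sum_zero
          rw [ZMod.ringChar_zmod_n]
          exact hq2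
        calc ∑ a ∈ range q, ((legendreSym q (a:ℤ) : ℤ) : ℂ)
            = ((∑ a ∈ range q, legendreSym q (a:ℤ) : ℤ) : ℂ) := by push_cast; rfl
          _ = 0 := by rw [h1, h2]; norm_num
      rw [hsum0, mul_zero]
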